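/- Fix an integer $n \ge 2$. For $L > 0$ and $t \ge 1$ define the tail integral $I_+(L,t) = \int_{(n-1)t + L\sqrt{t}}^{\infty} t^{-n/2}\, e^{-(r-(n-1)t)^2/(4t)}\, (1+r+t)^{(n-3)/2} (1+r)\, dr$. Then $I_+(L,t) \to 0$ as $L \to \infty$ uniformly in $t$: for every $\varepsilon > 0$ there exists $L_0 > 0$ such that $I_+(L,t) \le \varepsilon$ for all $L \ge L_0$ and all $t \ge 1$. -/

import Mathlib

set_option maxHeartbeats 1000000


open Real Filter MeasureTheory

/-- The tail integral `I₊(L,t)` measuring the heat-kernel mass of `ℍⁿ` located beyond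
the line `r = (n-1)t + L√t`. -/
noncomputable def tailIntegral (n : ℕ) (L t : ℝ) : ℝ :=
  ∫ r in Set.Ioi (((n : ℝ) - 1) * t + L * Real.sqrt t),
    t ^ (-(n : ℝ) / 2) * Real.exp (-(r - ((n : ℝ) - 1) * t) ^ 2 / (4 * t)) *
      (1 + r + t) ^ (((n : ℝ) - 3) / 2) * (1 + r)

lemma exp_shift_integrableOn (a c σ : ℝ) (hσ : 0 < σ) :
    IntegrableOn (fun r => Real.exp (-(r - c) / σ)) (Set.Ioi a) := by
  have h : (fun r : ℝ => Real.exp (-(r - c) / σ))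
      = fun r => Real.exp (c / σ) * Real.exp (-(1 / σ) * r) := by
    funext r; rw [← Real.exp_add]; congr 1; field_simp; ring
  rw [h]
  exact (exp_neg_integrableOn_Ioi a (by positivity)).const_mul _

lemma integral_exp_shift (a c σ : ℝ) (hσ : 0 < σ) :
    ∫ r in Set.Ioi a, Real.exp (-(r - c) / σ) = σ * Real.exp (-(a - c) / σ) := by
  have key := integral_Ioi_of_hasDerivAt_of_tendsto'
    (f := fun r : ℝ => -σ * Real.exp (-(r - c) / σ))
    (f' := fun r : ℝ => Real.exp (-(r - c) / σ)) (a := a) (m := 0)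
    ?_ (exp_shift_integrableOn a c σ hσ) ?_
  · rw [key]; ring
  · intro x _
    have h1 : HasDerivAt (fun r : ℝ => -(r - c) / σ) (-1 / σ) x := by
      simpa using (((hasDerivAt_id x).sub_const c).neg).div_const σ
    have h2 := (h1.exp).const_mul (-σ)
    refine h2.congr_deriv ?_
    have hσne : σ ≠ 0 := hσ.ne'
    have e : -σ * (-1 / σ) = 1 := by field_simp
    linear_combination (Real.exp (-(x - c) / σ)) * e
  · have h3 : Tendsto (fun r : ℝ => -(r - c) / σ) atTop atBot := by
      apply Tendsto.atBot_div_const hσ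
      apply tendsto_neg_atBot_iff.mpr
      exact tendsto_atTop_add_const_right atTop (-c) tendsto_id
    have h4 : Tendsto (fun r : ℝ => Real.exp (-(r - c) / σ)) atTop (nhds 0) :=
      Real.tendsto_exp_atBot.comp h3
    simpa using h4.const_mul (-σ)

lemma tail_pointwise (n : ℕ) (hn : 2 ≤ n) {t L r : ℝ} (ht : 1 ≤ t)
    (hL : 4 * ((n : ℝ) + 2) ≤ L) (hr : ((n : ℝ) - 1) * t + L * Real.sqrt t < r) :
    t ^ (-(n : ℝ) / 2) * Real.exp (-(r - ((n : ℝ) - 1) * t) ^ 2 / (4 * t)) *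
      (1 + r + t) ^ (((n : ℝ) - 3) / 2) * (1 + r)
      ≤ ((n : ℝ) + 1) ^ (n + 1) * t ^ (-(1 : ℝ) / 2) *
        Real.exp (-(r - ((n : ℝ) - 1) * t) / Real.sqrt t) := by
  have ht0 : (0 : ℝ) < t := by linarith
  have hn2 : (2 : ℝ) ≤ (n : ℝ) := by exact_mod_cast hn
  set σ := Real.sqrt t with hσdef
  have hσ0 : 0 < σ := Real.sqrt_pos.mpr ht0
  have hσ1 : 1 ≤ σ := by
    rw [hσdef, show (1 : ℝ) = Real.sqrt 1 by simp]
    exact Real.sqrt_le_sqrt ht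
  have hσsq : σ ^ 2 = t := Real.sq_sqrt ht0.le
  have hσt : σ ≤ t := by nlinarith
  have hL0 : (0 : ℝ) < L := lt_of_lt_of_le (by positivity) hL
  set s := (r - ((n : ℝ) - 1) * t) / σ with hsdef
  have hsσ : s * σ = r - ((n : ℝ) - 1) * t := by
    rw [hsdef, div_mul_cancel₀ _ hσ0.ne']
  have hLs : L ≤ s := by
    have h1 : L * σ < s * σ := by rw [hsσ]; linarith
    exact le_of_lt (lt_of_mul_lt_mul_right h1 hσ0.le)
  have hs0 : 0 < s := lt_of_lt_of_le (by positivity) (le_trans hL hLs)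
  have hs4 : 4 * ((n : ℝ) + 2) ≤ s := le_trans hL hLs
  have hr0 : 0 < r := by nlinarith
  have hexp : -(r - ((n : ℝ) - 1) * t) ^ 2 / (4 * t) = -s ^ 2 / 4 := by
    rw [← hsσ, ← hσsq]
    field_simp
  have hbase : 1 + r + t ≤ ((n : ℝ) + 1) * t * (1 + s) := by
    have h1 : s * σ ≤ s * t := by nlinarith
    nlinarith [mul_pos ht0 hs0]
  have hQ : 1 + r ≤ ((n : ℝ) + 1) * t * (1 + s) := by linarith
  have hone_np : (1 : ℝ) ≤ ((n : ℝ) + 1) ^ n := by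
    have := pow_le_pow_left₀ (by norm_num : (0:ℝ) ≤ 1) (by linarith : (1:ℝ) ≤ (n:ℝ) + 1) n
    simpa using this
  have hone_sp : (1 : ℝ) ≤ (1 + s) ^ n := by
    have := pow_le_pow_left₀ (by norm_num : (0:ℝ) ≤ 1) (by linarith : (1:ℝ) ≤ 1 + s) n
    simpa using this
  have hP : (1 + r + t) ^ (((n : ℝ) - 3) / 2)
      ≤ ((n : ℝ) + 1) ^ n * t ^ (((n : ℝ) - 3) / 2) * (1 + s) ^ n := by
    rcases lt_or_ge ((n : ℝ) - 3) 0 with hneg | hpos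
    · have h1 : (1 + r + t) ^ (((n : ℝ) - 3) / 2) ≤ t ^ (((n : ℝ) - 3) / 2) :=
        Real.rpow_le_rpow_of_nonpos ht0 (by linarith) (by linarith)
      have h2 : 0 < t ^ (((n : ℝ) - 3) / 2) := Real.rpow_pos_of_pos ht0 _
      nlinarith [mul_le_mul_of_nonneg_left hone_sp (le_trans h2.le (le_of_eq rfl))]
    · have e0 : 0 ≤ ((n : ℝ) - 3) / 2 := by linarith
      have h1 : (1 + r + t) ^ (((n : ℝ) - 3) / 2)
          ≤ (((n : ℝ) + 1) * t * (1 + s)) ^ (((n : ℝ) - 3) / 2) :=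
        Real.rpow_le_rpow (by linarith) hbase e0
      have h2 : (((n : ℝ) + 1) * t * (1 + s)) ^ (((n : ℝ) - 3) / 2)
          = ((n : ℝ) + 1) ^ (((n : ℝ) - 3) / 2) * t ^ (((n : ℝ) - 3) / 2)
            * (1 + s) ^ (((n : ℝ) - 3) / 2) := by
        rw [Real.mul_rpow (by positivity) (by positivity),
          Real.mul_rpow (by positivity) (by positivity)]
      have h3 : ((n : ℝ) + 1) ^ (((n : ℝ) - 3) / 2) ≤ ((n : ℝ) + 1) ^ n := by
        rw [← Real.rpow_natCast ((n : ℝ) + 1) n]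
        exact Real.rpow_le_rpow_of_exponent_le (by linarith) (by push_cast; linarith)
      have h4 : (1 + s) ^ (((n : ℝ) - 3) / 2) ≤ (1 + s) ^ n := by
        rw [← Real.rpow_natCast (1 + s) n]
        exact Real.rpow_le_rpow_of_exponent_le (by linarith) (by push_cast; linarith)
      have h5 : 0 < t ^ (((n : ℝ) - 3) / 2) := Real.rpow_pos_of_pos ht0 _
      calc (1 + r + t) ^ (((n : ℝ) - 3) / 2)
          ≤ ((n : ℝ) + 1) ^ (((n : ℝ) - 3) / 2) * t ^ (((n : ℝ) - 3) / 2)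
            * (1 + s) ^ (((n : ℝ) - 3) / 2) := by rw [← h2]; exact h1
        _ ≤ ((n : ℝ) + 1) ^ n * t ^ (((n : ℝ) - 3) / 2) * (1 + s) ^ n := by
            have hp1 : 0 ≤ ((n : ℝ) + 1) ^ (((n : ℝ) - 3) / 2) := by positivity
            have hp2 : 0 ≤ (1 + s) ^ (((n : ℝ) - 3) / 2) := by positivity
            gcongr
  have hT : t ^ (-(n : ℝ) / 2) * t ^ (((n : ℝ) - 3) / 2) * t = t ^ (-(1 : ℝ) / 2) := by
    have h : t ^ (-(n : ℝ) / 2) * t ^ (((n : ℝ) - 3) / 2) * t ^ (1 : ℝ)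
        = t ^ (-(1 : ℝ) / 2) := by
      rw [← Real.rpow_add ht0, ← Real.rpow_add ht0]
      congr 1
      ring
    simpa [Real.rpow_one] using h
  have hE : (1 + s) ^ (n + 1) * Real.exp (-s ^ 2 / 4) ≤ Real.exp (-s) := by
    have h1 : (1 + s) ^ (n + 1) ≤ Real.exp (((n : ℝ) + 1) * s) := by
      calc (1 + s) ^ (n + 1) ≤ (Real.exp s) ^ (n + 1) :=
            pow_le_pow_left₀ (by linarith) (by linarith [Real.add_one_le_exp s]) _
        _ = Real.exp (((n : ℕ) + 1 : ℕ) * s) := (Real.exp_nat_mul s (n + 1)).symm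
        _ = Real.exp (((n : ℝ) + 1) * s) := by push_cast; ring_nf
    calc (1 + s) ^ (n + 1) * Real.exp (-s ^ 2 / 4)
        ≤ Real.exp (((n : ℝ) + 1) * s) * Real.exp (-s ^ 2 / 4) := by
          gcongr
      _ = Real.exp (((n : ℝ) + 1) * s + -s ^ 2 / 4) := (Real.exp_add _ _).symm
      _ ≤ Real.exp (-s) := by
          apply Real.exp_le_exp.mpr
          nlinarith [mul_le_mul_of_nonneg_left hs4 hs0.le]
  have hEpos : 0 < Real.exp (-s ^ 2 / 4) := Real.exp_pos _
  have hA : 0 < t ^ (-(n : ℝ) / 2) := Real.rpow_pos_of_pos ht0 _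
  have hsneg : -(r - ((n : ℝ) - 1) * t) / σ = -s := by
    rw [hsdef]; ring
  rw [hexp, hsneg]
  calc t ^ (-(n : ℝ) / 2) * Real.exp (-s ^ 2 / 4) * (1 + r + t) ^ (((n : ℝ) - 3) / 2) * (1 + r)
      ≤ t ^ (-(n : ℝ) / 2) * Real.exp (-s ^ 2 / 4)
        * (((n : ℝ) + 1) ^ n * t ^ (((n : ℝ) - 3) / 2) * (1 + s) ^ n)
        * (((n : ℝ) + 1) * t * (1 + s)) := by
        have hPnn : 0 ≤ (1 + r + t) ^ (((n : ℝ) - 3) / 2) := by positivity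
        gcongr
    _ = ((n : ℝ) + 1) ^ (n + 1) * (t ^ (-(n : ℝ) / 2) * t ^ (((n : ℝ) - 3) / 2) * t)
        * ((1 + s) ^ (n + 1) * Real.exp (-s ^ 2 / 4)) := by
        rw [pow_succ, pow_succ]; ring
    _ = ((n : ℝ) + 1) ^ (n + 1) * t ^ (-(1 : ℝ) / 2)
        * ((1 + s) ^ (n + 1) * Real.exp (-s ^ 2 / 4)) := by rw [hT]
    _ ≤ ((n : ℝ) + 1) ^ (n + 1) * t ^ (-(1 : ℝ) / 2) * Real.exp (-s) := by
        gcongr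

/-- The tail integral `I₊(L,t)` tends to `0` as `L → ∞`, uniformly in `t ≥ 1`. -/
theorem tailIntegral_uniformly_small (n : ℕ) (hn : 2 ≤ n) :
    ∀ ε > (0 : ℝ), ∃ L₀ > (0 : ℝ), ∀ L ≥ L₀, ∀ t ≥ (1 : ℝ),
      tailIntegral n L t ≤ ε := by
  intro ε hε
  set C : ℝ := ((n : ℝ) + 1) ^ (n + 1) with hCdef
  have hC : 0 < C := by positivity
  refine ⟨max (4 * ((n : ℝ) + 2)) (Real.log (C / ε)) + 1, ?_, ?_⟩
  · have h1 : (0 : ℝ) < 4 * ((n : ℝ) + 2) := by positivity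
    have h2 := le_max_left (4 * ((n : ℝ) + 2)) (Real.log (C / ε))
    linarith
  intro L hL t ht
  have ht0 : (0 : ℝ) < t := by linarith
  set σ := Real.sqrt t with hσdef
  have hσ0 : 0 < σ := Real.sqrt_pos.mpr ht0
  have hL4 : 4 * ((n : ℝ) + 2) ≤ L := by
    have := le_max_left (4 * ((n : ℝ) + 2)) (Real.log (C / ε))
    linarith
  have hLlog : Real.log (C / ε) ≤ L := by
    have := le_max_right (4 * ((n : ℝ) + 2)) (Real.log (C / ε))
    linarith
  have hL0 : 0 < L := lt_of_lt_of_le (by positivity) hL4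
  set c : ℝ := ((n : ℝ) - 1) * t with hcdef
  set a : ℝ := c + L * σ with hadef
  -- the dominating function
  set h : ℝ → ℝ := fun r => C * t ^ (-(1 : ℝ) / 2) * Real.exp (-(r - c) / σ) with hhdef
  set f : ℝ → ℝ := fun r =>
    t ^ (-(n : ℝ) / 2) * Real.exp (-(r - c) ^ 2 / (4 * t)) *
      (1 + r + t) ^ (((n : ℝ) - 3) / 2) * (1 + r) with hfdef
  have hfh : ∀ r ∈ Set.Ioi a, f r ≤ h r := fun r hr =>
    tail_pointwise n hn ht hL4 hr
  have hf0 : ∀ r ∈ Set.Ioi a, 0 ≤ f r := by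
    intro r hr
    have hr0 : 0 < r := by
      simp only [Set.mem_Ioi] at hr
      have hn2 : (2 : ℝ) ≤ (n : ℝ) := by exact_mod_cast hn
      nlinarith
    have : (0:ℝ) < 1 + r + t := by linarith
    have := Real.rpow_pos_of_pos this (((n : ℝ) - 3) / 2)
    have := Real.rpow_pos_of_pos ht0 (-(n : ℝ) / 2)
    positivity
  have hmeasf : AEStronglyMeasurable f (volume.restrict (Set.Ioi a)) := by
    have hcont : ContinuousOn f (Set.Ioi a) := by
      apply ContinuousOn.mul
      apply ContinuousOn.mul
      apply ContinuousOn.mul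
      · exact continuousOn_const
      · exact (((continuous_id.sub continuous_const).pow 2).neg.div_const
          (4 * t)).rexp.continuousOn
      · apply ContinuousOn.rpow_const
          ((continuous_const.add continuous_id).add continuous_const).continuousOn
        intro r hr
        have hr0 : 0 < r := by
          simp only [Set.mem_Ioi] at hr
          have hn2 : (2 : ℝ) ≤ (n : ℝ) := by exact_mod_cast hn
          nlinarith
        left
        show (1 : ℝ) + r + t ≠ 0
        have hb : (0:ℝ) < 1 + r + t := by linarith
        exact hb.ne'
      · exact (continuous_const.add continuous_id).continuousOn
    exact hcont.aestronglyMeasurable measurableSet_Ioi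
  have hIh : IntegrableOn h (Set.Ioi a) :=
    (exp_shift_integrableOn a c σ hσ0).const_mul _
  have hIf : IntegrableOn f (Set.Ioi a) := by
    apply Integrable.mono' hIh hmeasf
    rw [ae_restrict_iff' measurableSet_Ioi]
    apply ae_of_all
    intro r hr
    rw [Real.norm_eq_abs, abs_of_nonneg (hf0 r hr)]
    exact hfh r hr
  have hint : tailIntegral n L t ≤ ∫ r in Set.Ioi a, h r := by
    rw [tailIntegral]
    exact setIntegral_mono_on hIf hIh measurableSet_Ioi hfh
  have hval : ∫ r in Set.Ioi a, h r = C * Real.exp (-L) := by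
    rw [hhdef]
    simp only []
    rw [MeasureTheory.integral_const_mul, integral_exp_shift a c σ hσ0]
    have hac : -(a - c) / σ = -L := by
      rw [hadef]; field_simp; ring
    rw [hac]
    have hts : t ^ (-(1 : ℝ) / 2) * σ = 1 := by
      rw [hσdef, Real.sqrt_eq_rpow, ← Real.rpow_add ht0]
      norm_num
    calc C * t ^ (-(1 : ℝ) / 2) * (σ * Real.exp (-L))
        = C * (t ^ (-(1 : ℝ) / 2) * σ) * Real.exp (-L) := by ring
      _ = C * Real.exp (-L) := by rw [hts]; ring
  have hfin : C * Real.exp (-L) ≤ ε := by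
    have h1 : Real.exp (-L) ≤ Real.exp (-Real.log (C / ε)) := by
      apply Real.exp_le_exp.mpr; linarith
    have h2 : Real.exp (-Real.log (C / ε)) = ε / C := by
      rw [Real.exp_neg, Real.exp_log (by positivity)]
      field_simp
    have h3 : C * Real.exp (-L) ≤ C * (ε / C) := by
      rw [← h2] at *; exact mul_le_mul_of_nonneg_left h1 hC.le
    calc C * Real.exp (-L) ≤ C * (ε / C) := h3
      _ = ε := by field_simp
  linarith [hint, le_of_eq hval]
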